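/- The rings R₁ = (ℤ/2)⟨A, X⟩/⟨1 + AX⟩ and R₂ = (ℤ/2)⟨a, x, b₁, b₂⟩/⟨1 + (1+b₂b₁)a, 1 + a(1+b₂b₁)⟩ are not isomorphic as rings. -/

import Mathlib

open FreeAlgebra

/-- The free noncommutative unital algebra over ℤ/2 on generators A, X. -/
abbrev F1 : Type := FreeAlgebra (ZMod 2) (Fin 2)

/-- The relation 1 + AX = 0 (i.e. AX = 1). -/
inductive Rel1 : F1 → F1 → Prop
  | r : Rel1 (1 + ι (ZMod 2) 0 * ι (ZMod 2) 1) 0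

/-- R₁ = (ℤ/2)⟨A, X⟩ / ⟨1 + AX⟩. -/
abbrev Ring1 : Type := RingQuot Rel1

/-- The free noncommutative unital algebra over ℤ/2 on generators a, x, b₁, b₂. -/
abbrev F2 : Type := FreeAlgebra (ZMod 2) (Fin 4)

/-- The relations 1 + (1 + b₂b₁)a = 0 and 1 + a(1 + b₂b₁) = 0. -/
inductive Rel2 : F2 → F2 → Prop
  | r1 : Rel2 (1 + (1 + ι (ZMod 2) 3 * ι (ZMod 2) 2) * ι (ZMod 2) 0) 0
  | r2 : Rel2 (1 + ι (ZMod 2) 0 * (1 + ι (ZMod 2) 3 * ι (ZMod 2) 2)) 0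

/-- R₂ = (ℤ/2)⟨a, x, b₁, b₂⟩ / ⟨1 + (1+b₂b₁)a, 1 + a(1+b₂b₁)⟩. -/
abbrev Ring2 : Type := RingQuot Rel2

/-- Evaluation hom R₂ → ℤ/2 sending a ↦ 1, x ↦ c, b₁ ↦ 0, b₂ ↦ 0. -/
noncomputable def ev (c : ZMod 2) : Ring2 →+* ZMod 2 :=
  RingQuot.lift ⟨(FreeAlgebra.lift (ZMod 2) ![1, c, 0, 0]).toRingHom, by
    rintro x y (h | h) <;> simp <;> decide⟩

lemma ev_x (c : ZMod 2) : ev c (RingQuot.mkRingHom Rel2 (ι (ZMod 2) 1)) = c := by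
  simp [ev, RingQuot.lift_mkRingHom_apply]

lemma uniq (f g : Ring1 →+* ZMod 2) : f = g := by
  have key : ∀ (h : Ring1 →+* ZMod 2),
      h (RingQuot.mkRingHom Rel1 (ι (ZMod 2) 0)) = 1 ∧
      h (RingQuot.mkRingHom Rel1 (ι (ZMod 2) 1)) = 1 := by
    intro h
    have hr := congrArg h (RingQuot.mkRingHom_rel Rel1.r)
    simp only [map_add, map_mul, map_one, map_zero] at hr
    revert hr
    generalize h (RingQuot.mkRingHom Rel1 (ι (ZMod 2) 0)) = u
    generalize h (RingQuot.mkRingHom Rel1 (ι (ZMod 2) 1)) = v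
    revert u v; decide
  refine RingHom.ext fun z => ?_
  obtain ⟨w, rfl⟩ := RingQuot.mkRingHom_surjective Rel1 z
  induction w using FreeAlgebra.induction with
  | grade0 r =>
      exact congrArg (fun φ : ZMod 2 →+* ZMod 2 => φ r) (Subsingleton.elim ((f.comp (RingQuot.mkRingHom Rel1)).comp (algebraMap (ZMod 2) F1)) ((g.comp (RingQuot.mkRingHom Rel1)).comp (algebraMap (ZMod 2) F1)))
  | grade1 i =>
      fin_cases i
      · exact ((key f).1).trans ((key g).1).symm
      · exact ((key f).2).trans ((key g).2).symm
  | mul x y hx hy => simp only [map_mul] at *; rw [hx, hy]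
  | add x y hx hy => simp only [map_add] at *; rw [hx, hy]

/-- The rings R₁ and R₂ are not isomorphic as rings. -/
theorem stmt2 : IsEmpty (Ring1 ≃+* Ring2) := by
  constructor
  intro e
  have h0 : ((ev 0).comp e.toRingHom) = ((ev 1).comp e.toRingHom) := uniq _ _
  have h1 := congrArg (fun f : Ring1 →+* ZMod 2 =>
      f (e.symm (RingQuot.mkRingHom Rel2 (ι (ZMod 2) 1)))) h0
  simp only [RingHom.comp_apply, RingEquiv.toRingHom_eq_coe, RingHom.coe_coe,
    RingEquiv.apply_symm_apply, ev_x] at h1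
  exact absurd h1 (by decide)
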